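/- Let p be a prime and let C be a conference matrix of order p + 1. Then the rank of the matrix obtained by reducing C modulo p, viewed as a matrix over the field ℤ/pℤ, equals (p+1)/2. -/

import Mathlib

open Matrix Module

private lemma filter_fin_lt_card {n k : ℕ} (hk : k ≤ n) :
    (Finset.univ.filter fun j : Fin n => (j : ℕ) < k).card = k := by
  have h : (Finset.univ.filter fun j : Fin n => (j : ℕ) < k) =
      (Finset.range k).attachFin (fun m hm => lt_of_lt_of_le (Finset.mem_range.mp hm) hk) := by
    ext j
    simp [Finset.mem_attachFin]
  rw [h, Finset.card_attachFin, Finset.card_range]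

/-- If an `n × n` integer matrix has rank `r` mod `p`, then `p ^ (n - r)` divides its
determinant. -/
private lemma pow_sub_rank_dvd_det (p n : ℕ) (hp : p.Prime) (M : Matrix (Fin n) (Fin n) ℤ) :
    (p : ℤ) ^ (n - (M.map (Int.cast : ℤ → ZMod p)).rank) ∣ M.det := by
  classical
  haveI := Fact.mk hp
  set A := M.map (Int.cast : ℤ → ZMod p) with hA
  set r := A.rank with hr
  set k := n - r with hk
  -- the kernel of A has dimension k
  have hrank : r + finrank (ZMod p) (LinearMap.ker A.mulVecLin) = n := by
    have h := LinearMap.finrank_range_add_finrank_ker A.mulVecLin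
    rw [Module.finrank_pi] at h
    simpa [hr, Matrix.rank] using h
  have hrn : r ≤ n := le_of_add_le_left hrank.le
  have hdim : finrank (ZMod p) (LinearMap.ker A.mulVecLin) = k := by omega
  -- basis of the kernel
  let b : Basis (Fin k) (ZMod p) (LinearMap.ker A.mulVecLin) :=
    (Module.finBasis (ZMod p) (LinearMap.ker A.mulVecLin)).reindex (finCongr hdim)
  -- complement and its basis
  obtain ⟨W, hW⟩ := Submodule.exists_isCompl (LinearMap.ker A.mulVecLin)
  have hWdim : finrank (ZMod p) W = n - k := by
    have h := Submodule.finrank_add_eq_of_isCompl hW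
    rw [hdim, Module.finrank_pi] at h
    simp only [Fintype.card_fin] at h
    omega
  let bW : Basis (Fin (n - k)) (ZMod p) W :=
    (Module.finBasis (ZMod p) W).reindex (finCongr hWdim)
  have hkn : k ≤ n := Nat.sub_le _ _
  let e : (Fin k ⊕ Fin (n - k)) ≃ Fin n :=
    finSumFinEquiv.trans (finCongr (by omega))
  -- full basis of (Fin n → ZMod p)
  let big : Basis (Fin n) (ZMod p) (Fin n → ZMod p) :=
    (((b.prod bW).map (Submodule.prodEquivOfIsCompl _ W hW)).reindex e)
  have hbig_mem : ∀ j : Fin k, big (e (Sum.inl j)) ∈ LinearMap.ker A.mulVecLin := by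
    intro j
    simp only [big, Module.Basis.reindex_apply, Equiv.symm_apply_apply, Basis.map_apply,
      Basis.prod_apply]
    simp [Submodule.coe_prodEquivOfIsCompl]
  -- the change of basis matrix
  let U : Matrix (Fin n) (Fin n) (ZMod p) := Matrix.of fun i j => big j i
  have hUdet : IsUnit U.det := by
    have hU : U = (Pi.basisFun (ZMod p) (Fin n)).toMatrix big := by
      ext i j
      simp [U, Basis.toMatrix_apply]
    rw [hU]
    haveI := (Pi.basisFun (ZMod p) (Fin n)).invertibleToMatrix big
    exact Matrix.isUnit_det_of_invertible _
  -- integer lift of U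
  let U' : Matrix (Fin n) (Fin n) ℤ := Matrix.of fun i j => ((U i j).val : ℤ)
  have hU'map : U'.map (Int.cast : ℤ → ZMod p) = U := by
    ext i j
    simp [U', ZMod.natCast_val, ZMod.cast_id]
  -- columns with index < k of M * U' are divisible by p
  have hMU : (M * U').map (Int.cast : ℤ → ZMod p) = A * U := by
    rw [← hU'map, hA]
    exact Matrix.map_mul (f := Int.castRingHom (ZMod p))
  have hcols : ∀ (i : Fin n) (c : Fin n), (c : ℕ) < k → (p : ℤ) ∣ (M * U') i c := by
    intro i c hc
    rw [← ZMod.intCast_zmod_eq_zero_iff_dvd]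
    have h1 : (((M * U') i c : ℤ) : ZMod p) = (A * U) i c := by
      rw [← hMU]; rfl
    rw [h1]
    have hc' : c = e (Sum.inl ⟨(c : ℕ), hc⟩) := by
      apply Fin.ext
      simp [e, finSumFinEquiv]
    have hker : A.mulVec (fun j => U j c) = 0 := by
      have h2 : (fun j => U j c) = big c := rfl
      rw [h2, hc']
      exact hbig_mem _
    calc (A * U) i c = A.mulVec (fun j => U j c) i := by
          simp [Matrix.mul_apply, Matrix.mulVec, dotProduct]
      _ = 0 := by rw [hker]; rfl
  -- factor p out of the first k columns
  let E : Matrix (Fin n) (Fin n) ℤ :=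
    Matrix.of fun i c => if (c : ℕ) < k then (M * U') i c / p else (M * U') i c
  let Dg : Matrix (Fin n) (Fin n) ℤ :=
    Matrix.diagonal fun c => if (c : ℕ) < k then (p : ℤ) else 1
  have hED : E * Dg = M * U' := by
    ext i c
    rw [Matrix.mul_diagonal]
    by_cases hc : (c : ℕ) < k
    · simp only [E, Matrix.of_apply, hc, if_true]
      exact Int.ediv_mul_cancel (hcols i c hc)
    · simp [E, hc]
  have hDgdet : Dg.det = (p : ℤ) ^ k := by
    rw [Matrix.det_diagonal, Finset.prod_ite, Finset.prod_const, Finset.prod_const_one,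
      mul_one, filter_fin_lt_card hkn]
  have hdet : M.det * U'.det = E.det * (p : ℤ) ^ k := by
    rw [← Matrix.det_mul, ← hED, Matrix.det_mul, hDgdet]
  have hdvd : (p : ℤ) ^ k ∣ M.det * U'.det := ⟨E.det, by rw [hdet]; ring⟩
  have hpu : ¬ (p : ℤ) ∣ U'.det := by
    intro h
    have h0 : ((U'.det : ℤ) : ZMod p) = 0 := (ZMod.intCast_zmod_eq_zero_iff_dvd _ _).mpr h
    have h1 : ((U'.det : ℤ) : ZMod p) = (U'.map (Int.cast : ℤ → ZMod p)).det :=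
      RingHom.map_det (Int.castRingHom (ZMod p)) U'
    rw [h1, hU'map] at h0
    exact hUdet.ne_zero h0
  exact (Nat.prime_iff_prime_int.mp hp).pow_dvd_of_dvd_mul_right k hpu hdvd

/-- A weighing matrix of order `n` and weight `w`. -/
def IsWeighing (n w : ℕ) (W : Matrix (Fin n) (Fin n) ℤ) : Prop :=
  (∀ i j, W i j = 0 ∨ W i j = 1 ∨ W i j = -1) ∧
  (∀ i : Fin n, (Finset.univ.filter (fun j => W i j ≠ 0)).card = w) ∧
  (∀ j : Fin n, (Finset.univ.filter (fun i => W i j ≠ 0)).card = w) ∧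
  W * W.transpose = (w : ℤ) • (1 : Matrix (Fin n) (Fin n) ℤ)

/-- A conference matrix of order `p + 1` (a weighing matrix of weight `p`),
`p` prime, reduced modulo `p`, has rank `(p+1)/2` over the field `ℤ/pℤ`. -/
theorem rank_conference_matrix_mod_p
    (p : ℕ) (hp : p.Prime) (C : Matrix (Fin (p + 1)) (Fin (p + 1)) ℤ)
    (hC : IsWeighing (p + 1) p C) :
    (C.map (Int.cast : ℤ → ZMod p)).rank = (p + 1) / 2 := by
  classical
  haveI := Fact.mk hp
  obtain ⟨-, -, -, hmul⟩ := hC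
  set A := C.map (Int.cast : ℤ → ZMod p) with hA
  set r := A.rank with hr
  -- upper bound : A * Aᵀ = 0 mod p
  have hAAT : A * Aᵀ = 0 := by
    have h1 : (C * Cᵀ).map (Int.cast : ℤ → ZMod p) = A * Aᵀ := by
      rw [hA, ← Matrix.transpose_map]
      exact Matrix.map_mul (f := Int.castRingHom (ZMod p))
    rw [hmul] at h1
    rw [← h1]
    ext i j
    rw [Matrix.map_apply, Matrix.smul_apply, smul_eq_mul]
    push_cast
    simp
  have hupper : r + r ≤ p + 1 := by
    have h := Matrix.rank_add_rank_le_card_of_mul_eq_zero hAAT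
    rw [Matrix.rank_transpose] at h
    simpa using h
  -- lower bound via determinant
  have hdet2 : C.det * C.det = (p : ℤ) ^ (p + 1) := by
    have h := congrArg Matrix.det hmul
    rw [Matrix.det_mul, Matrix.det_transpose, Matrix.det_smul, Matrix.det_one,
      Fintype.card_fin, mul_one] at h
    exact h
  have hdvd : (p : ℤ) ^ ((p + 1 - r) + (p + 1 - r)) ∣ (p : ℤ) ^ (p + 1) := by
    rw [← hdet2, pow_add]
    exact mul_dvd_mul (pow_sub_rank_dvd_det p (p + 1) hp C)
      (pow_sub_rank_dvd_det p (p + 1) hp C)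
  have hdvdN : p ^ ((p + 1 - r) + (p + 1 - r)) ∣ p ^ (p + 1) := by
    exact_mod_cast hdvd
  have hlower : (p + 1 - r) + (p + 1 - r) ≤ p + 1 :=
    (Nat.pow_dvd_pow_iff_le_right hp.one_lt).mp hdvdN
  have hrle : r ≤ p + 1 := by
    have := Matrix.rank_le_card_width A
    simpa using this
  omega
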